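/- arXiv:1703.04035 — 2 statements merged into one kernel-verified Lean document; each statement's English description precedes it below -/
import Mathlib

section
/- If a graph G is generically bearing rigid in R^d (i.e., there exists a configuration p with (G,p) bearing rigid), then for any configuration p_0 and any epsilon > 0 there exists a configuration p with ||p - p_0|| < epsilon such that (G, p) is bearing rigid. -/
open Matrix

open scoped Classical in
/-- The orthogonal projection matrix `P(x) = I - x xᵀ / ‖x‖²`. -/
noncomputable def proj {d : ℕ} (x : Fin d → ℝ) : Matrix (Fin d) (Fin d) ℝ :=
  1 - (x ⬝ᵥ x)⁻¹ • Matrix.vecMulVec x x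

open scoped Classical in
/-- The bearing Laplacian of the network `(G, p)`: the `dn × dn` block matrix with
`[L]_{ij} = -P(g_{ij})` for edges `(i,j)`, `0` for non-adjacent `i ≠ j`, and
`[L]_{ii} = ∑_{j ∈ N_i} P(g_{ij})`.  Since `proj` is scale-invariant,
`proj (p j - p i) = P(g_{ij})` for the unit bearing `g_{ij}`. -/
noncomputable def bearingLaplacian {V : Type*} [Fintype V] {d : ℕ}
    (G : SimpleGraph V) (p : V → Fin d → ℝ) :
    Matrix (V × Fin d) (V × Fin d) ℝ :=
  fun q r =>
    if q.1 = r.1 then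
      (∑ k ∈ Finset.univ.filter (fun k => G.Adj q.1 k), proj (p k - p q.1)) q.2 r.2
    else if G.Adj q.1 r.1 then -(proj (p r.1 - p q.1) q.2 r.2) else 0

section lems
open scoped Classical
variable {d : ℕ}

lemma proj_apply (x : Fin d → ℝ) (a b : Fin d) :
    proj x a b = (if a = b then 1 else 0) - (x ⬝ᵥ x)⁻¹ * (x a * x b) := by
  simp [proj, Matrix.sub_apply, Matrix.one_apply, Matrix.vecMulVec_apply]

lemma proj_neg (x : Fin d → ℝ) : proj (-x) = proj x := by
  ext a b
  simp [proj_apply]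

lemma proj_symm (x : Fin d → ℝ) (a b : Fin d) : proj x a b = proj x b a := by
  simp [proj_apply, mul_comm]
  by_cases h : a = b <;> simp [h, eq_comm]

lemma proj_mulVec (x u : Fin d → ℝ) :
    proj x *ᵥ u = u - ((x ⬝ᵥ x)⁻¹ * (x ⬝ᵥ u)) • x := by
  funext a
  simp only [mulVec, dotProduct, proj_apply, Pi.sub_apply, Pi.smul_apply, smul_eq_mul]
  simp only [sub_mul]
  rw [Finset.sum_sub_distrib]
  congr 1
  · simp [ite_mul]
  · rw [Finset.mul_sum, Finset.sum_mul]
    exact Finset.sum_congr rfl fun b _ => by ring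

lemma proj_mulVec_self (x : Fin d → ℝ) : proj x *ᵥ x = 0 := by
  rw [proj_mulVec]
  by_cases h : x ⬝ᵥ x = 0
  · have : x = 0 := dotProduct_self_eq_zero.mp h
    simp [this]
  · rw [inv_mul_cancel₀ h]
    simp

lemma proj_form_nonneg (x u : Fin d → ℝ) : 0 ≤ u ⬝ᵥ (proj x *ᵥ u) := by
  rw [proj_mulVec, dotProduct_sub, dotProduct_smul]
  by_cases h : x ⬝ᵥ x = 0
  · have hx : x = 0 := dotProduct_self_eq_zero.mp h
    simp [hx]
    exact Finset.sum_nonneg fun i _ => mul_self_nonneg _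
  · have hpos : 0 < x ⬝ᵥ x :=
      lt_of_le_of_ne (Finset.sum_nonneg fun i _ => mul_self_nonneg (x i)) (Ne.symm h)
    have hcs : (x ⬝ᵥ u) * (x ⬝ᵥ u) ≤ (x ⬝ᵥ x) * (u ⬝ᵥ u) := by
      have := Finset.sum_mul_sq_le_sq_mul_sq Finset.univ x u
      simpa [dotProduct, pow_two, mul_comm] using this
    have hux : u ⬝ᵥ x = x ⬝ᵥ u := dotProduct_comm u x
    rw [smul_eq_mul]
    rw [show u ⬝ᵥ u - (x ⬝ᵥ x)⁻¹ * x ⬝ᵥ u * (u ⬝ᵥ x)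
        = (x ⬝ᵥ x)⁻¹ * ((x ⬝ᵥ x) * (u ⬝ᵥ u) - (x ⬝ᵥ u) * (x ⬝ᵥ u)) from by rw [hux]; field_simp]
    exact mul_nonneg (inv_nonneg.mpr hpos.le) (by linarith)


open scoped Classical

variable {n : ℕ} (G : SimpleGraph (Fin n))

/-- slice of a stacked vector -/
def vsl (v : Fin n × Fin d → ℝ) (i : Fin n) : Fin d → ℝ := fun a => v (i, a)

lemma bL_mulVec (q : Fin n → Fin d → ℝ) (v : Fin n × Fin d → ℝ) (i : Fin n) (a : Fin d) :
    (bearingLaplacian G q *ᵥ v) (i, a) =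
      ∑ j ∈ Finset.univ.filter (fun k => G.Adj i k),
        (proj (q j - q i) *ᵥ (vsl v i - vsl v j)) a := by
  have hg : ∀ j : Fin n, ∑ b : Fin d, bearingLaplacian G q (i,a) (j,b) * v (j,b)
      = if i = j then ∑ k ∈ Finset.univ.filter (fun k => G.Adj i k),
          (proj (q k - q i) *ᵥ vsl v i) a
        else if G.Adj i j then -((proj (q j - q i) *ᵥ vsl v j) a) else 0 := by
    intro j
    simp only [bearingLaplacian]
    by_cases hij : i = j
    · subst hij
      simp only [eq_self_iff_true, if_true, Matrix.sum_apply, Finset.sum_mul]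
      rw [Finset.sum_comm]
      rfl
    · simp only [if_neg hij]
      by_cases hadj : G.Adj i j
      · simp only [if_pos hadj, neg_mul, Finset.sum_neg_distrib]
        rfl
      · simp only [if_neg hadj]
        simp
  have h0 : (bearingLaplacian G q *ᵥ v) (i, a)
      = ∑ y : Fin n × Fin d, bearingLaplacian G q (i,a) y * v y := rfl
  rw [h0, Fintype.sum_prod_type]
  simp only [hg]
  rw [← Finset.add_sum_erase _ _ (Finset.mem_univ i), if_pos rfl]
  have h1 : ∑ j ∈ Finset.univ.erase i,
      (if i = j then ∑ k ∈ Finset.univ.filter (fun k => G.Adj i k),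
          (proj (q k - q i) *ᵥ vsl v i) a
       else if G.Adj i j then -((proj (q j - q i) *ᵥ vsl v j) a) else 0)
      = ∑ j ∈ Finset.univ.filter (fun k => G.Adj i k), -((proj (q j - q i) *ᵥ vsl v j) a) := by
    rw [Finset.sum_congr rfl (fun j hj => by
      rw [if_neg (fun h => (Finset.mem_erase.mp hj).1 h.symm)])]
    rw [← Finset.sum_filter]
    congr 1
    ext j
    simp only [Finset.mem_filter, Finset.mem_erase, Finset.mem_univ, true_and, and_true]
    exact ⟨fun h => h.2, fun h => ⟨h.ne', h⟩⟩
  rw [h1]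
  have h2 : ∀ j ∈ Finset.univ.filter (fun k => G.Adj i k),
      (proj (q j - q i) *ᵥ (vsl v i - vsl v j)) a
      = (proj (q j - q i) *ᵥ vsl v i) a - (proj (q j - q i) *ᵥ vsl v j) a := by
    intro j _
    rw [Matrix.mulVec_sub]
    rfl
  rw [Finset.sum_congr rfl h2, Finset.sum_sub_distrib, Finset.sum_neg_distrib]
  ring

def qvec (q : Fin n → Fin d → ℝ) : Fin n × Fin d → ℝ := fun x => q x.1 x.2

lemma bL_mulVec_qvec (q : Fin n → Fin d → ℝ) :
    bearingLaplacian G q *ᵥ qvec q = 0 := by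
  funext x
  obtain ⟨i, a⟩ := x
  rw [bL_mulVec]
  have : ∀ j, vsl (qvec q) i - vsl (qvec q) j = -(q j - q i) := by
    intro j; funext b; simp [vsl, qvec]
  simp only [this, Matrix.mulVec_neg, proj_mulVec_self]
  simp

lemma bL_mulVec_cvec (q : Fin n → Fin d → ℝ) (c : Fin d → ℝ) :
    bearingLaplacian G q *ᵥ (fun x => c x.2) = 0 := by
  funext x
  obtain ⟨i, a⟩ := x
  rw [bL_mulVec]
  have : ∀ j : Fin n, vsl (fun x : Fin n × Fin d => c x.2) i
      - vsl (fun x : Fin n × Fin d => c x.2) j = 0 := by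
    intro j; funext b; simp [vsl]
  simp [this]

lemma bL_symm_entry (q : Fin n → Fin d → ℝ) (x y : Fin n × Fin d) :
    bearingLaplacian G q x y = bearingLaplacian G q y x := by
  obtain ⟨i, a⟩ := x
  obtain ⟨j, b⟩ := y
  simp only [bearingLaplacian]
  by_cases hij : i = j
  · subst hij
    simp only [if_pos rfl, Matrix.sum_apply]
    exact Finset.sum_congr rfl fun k _ => proj_symm _ _ _
  · rw [if_neg hij, if_neg (show ¬ j = i from fun hh => hij hh.symm)]
    by_cases hadj : G.Adj i j
    · rw [if_pos hadj, if_pos hadj.symm]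
      rw [show q i - q j = -(q j - q i) from (neg_sub _ _).symm, proj_neg]
      rw [proj_symm]
    · rw [if_neg hadj, if_neg (show ¬ G.Adj j i from fun hh => hadj hh.symm)]

lemma bL_isHermitian (q : Fin n → Fin d → ℝ) :
    (bearingLaplacian G q).IsHermitian := by
  ext x y
  rw [Matrix.conjTranspose_apply, star_trivial]
  exact bL_symm_entry G q y x

/-- set of adjacent ordered pairs -/
noncomputable def AdjP (G : SimpleGraph (Fin n)) : Finset (Fin n × Fin n) :=
  Finset.univ.filter (fun e => G.Adj e.1 e.2)

lemma sum_swap_adj (F : Fin n → Fin n → ℝ) :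
    ∑ e ∈ AdjP G, F e.1 e.2 = ∑ e ∈ AdjP G, F e.2 e.1 := by
  refine Finset.sum_equiv (Equiv.prodComm (Fin n) (Fin n)) ?_ ?_
  · intro e; simp [AdjP, G.adj_comm]
  · intro e _; rfl

lemma bL_qform (q : Fin n → Fin d → ℝ) (v : Fin n × Fin d → ℝ) :
    v ⬝ᵥ (bearingLaplacian G q *ᵥ v)
      = ∑ e ∈ AdjP G, vsl v e.1 ⬝ᵥ (proj (q e.2 - q e.1) *ᵥ (vsl v e.1 - vsl v e.2)) := by
  rw [show v ⬝ᵥ (bearingLaplacian G q *ᵥ v)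
      = ∑ x : Fin n × Fin d, v x * (bearingLaplacian G q *ᵥ v) x from rfl]
  rw [Fintype.sum_prod_type]
  have h1 : ∀ i : Fin n, ∑ a : Fin d, v (i, a) * (bearingLaplacian G q *ᵥ v) (i, a)
      = ∑ j ∈ Finset.univ.filter (fun k => G.Adj i k),
          vsl v i ⬝ᵥ (proj (q j - q i) *ᵥ (vsl v i - vsl v j)) := by
    intro i
    have : ∀ a : Fin d, v (i, a) * (bearingLaplacian G q *ᵥ v) (i, a)
        = ∑ j ∈ Finset.univ.filter (fun k => G.Adj i k),
            v (i, a) * (proj (q j - q i) *ᵥ (vsl v i - vsl v j)) a := by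
      intro a
      rw [bL_mulVec, Finset.mul_sum]
    rw [Finset.sum_congr rfl fun a _ => this a, Finset.sum_comm]
    rfl
  rw [Finset.sum_congr rfl fun i _ => h1 i]
  rw [AdjP, Finset.sum_filter, Fintype.sum_prod_type]
  refine Finset.sum_congr rfl fun i _ => ?_
  exact Finset.sum_filter (fun j => G.Adj i j)
    (fun j => vsl v i ⬝ᵥ (proj (q j - q i) *ᵥ (vsl v i - vsl v j)))

lemma bL_posSemidef (q : Fin n → Fin d → ℝ) :
    (bearingLaplacian G q).PosSemidef := by
  refine Matrix.PosSemidef.of_dotProduct_mulVec_nonneg (bL_isHermitian G q) fun v => ?_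
  rw [show star v = v from funext fun _ => star_trivial _]
  rw [bL_qform]
  have h2 : ∑ e ∈ AdjP G, vsl v e.1 ⬝ᵥ (proj (q e.2 - q e.1) *ᵥ (vsl v e.1 - vsl v e.2))
      = ∑ e ∈ AdjP G, vsl v e.2 ⬝ᵥ (proj (q e.1 - q e.2) *ᵥ (vsl v e.2 - vsl v e.1)) :=
    sum_swap_adj G (fun i j => vsl v i ⬝ᵥ (proj (q j - q i) *ᵥ (vsl v i - vsl v j)))
  have h3 : ∀ e : Fin n × Fin n,
      vsl v e.2 ⬝ᵥ (proj (q e.1 - q e.2) *ᵥ (vsl v e.2 - vsl v e.1))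
      = -(vsl v e.2 ⬝ᵥ (proj (q e.2 - q e.1) *ᵥ (vsl v e.1 - vsl v e.2))) := by
    intro e
    rw [show q e.1 - q e.2 = -(q e.2 - q e.1) from (neg_sub _ _).symm, proj_neg,
      show vsl v e.2 - vsl v e.1 = -(vsl v e.1 - vsl v e.2) from (neg_sub _ _).symm,
      Matrix.mulVec_neg, dotProduct_neg]
  have key : 2 * ∑ e ∈ AdjP G, vsl v e.1 ⬝ᵥ (proj (q e.2 - q e.1) *ᵥ (vsl v e.1 - vsl v e.2))
      = ∑ e ∈ AdjP G,
          (vsl v e.1 - vsl v e.2) ⬝ᵥ (proj (q e.2 - q e.1) *ᵥ (vsl v e.1 - vsl v e.2)) := by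
    rw [two_mul]
    nth_rewrite 2 [h2]
    rw [← Finset.sum_add_distrib]
    refine Finset.sum_congr rfl fun e _ => ?_
    rw [h3 e, sub_dotProduct]
    ring
  have hnn : 0 ≤ ∑ e ∈ AdjP G,
      (vsl v e.1 - vsl v e.2) ⬝ᵥ (proj (q e.2 - q e.1) *ᵥ (vsl v e.1 - vsl v e.2)) :=
    Finset.sum_nonneg fun e _ => proj_form_nonneg _ _
  linarith [key, hnn]

noncomputable def Kmat (q : Fin n → Fin d → ℝ) :
    Matrix (Fin n × Fin d) (Fin n × Fin d) ℝ :=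
  fun x y => (if x.2 = y.2 then 1 else 0) + q x.1 x.2 * q y.1 y.2

def colS (v : Fin n × Fin d → ℝ) (b : Fin d) : ℝ := ∑ i : Fin n, v (i, b)

def Tq (q : Fin n → Fin d → ℝ) (v : Fin n × Fin d → ℝ) : ℝ :=
  ∑ x : Fin n × Fin d, q x.1 x.2 * v x

lemma Kmat_mulVec (q : Fin n → Fin d → ℝ) (v : Fin n × Fin d → ℝ) (x : Fin n × Fin d) :
    (Kmat q *ᵥ v) x = colS v x.2 + q x.1 x.2 * Tq q v := by
  rw [show (Kmat q *ᵥ v) x = ∑ y : Fin n × Fin d, Kmat q x y * v y from rfl]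
  simp only [Kmat, add_mul]
  rw [Finset.sum_add_distrib]
  congr 1
  · rw [Fintype.sum_prod_type]
    rw [colS]
    refine Finset.sum_congr rfl fun j _ => ?_
    simp [ite_mul]
  · rw [Tq, Finset.mul_sum]
    refine Finset.sum_congr rfl fun y _ => ?_
    ring

lemma Kmat_qform (q : Fin n → Fin d → ℝ) (v : Fin n × Fin d → ℝ) :
    v ⬝ᵥ (Kmat q *ᵥ v) = (∑ b : Fin d, colS v b * colS v b) + Tq q v * Tq q v := by
  rw [show v ⬝ᵥ (Kmat q *ᵥ v) = ∑ x : Fin n × Fin d, v x * (Kmat q *ᵥ v) x from rfl]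
  have : ∀ x : Fin n × Fin d, v x * (Kmat q *ᵥ v) x
      = v x * colS v x.2 + (q x.1 x.2 * v x) * Tq q v := by
    intro x; rw [Kmat_mulVec]; ring
  rw [Finset.sum_congr rfl fun x _ => this x, Finset.sum_add_distrib]
  congr 1
  · rw [Fintype.sum_prod_type, Finset.sum_comm]
    refine Finset.sum_congr rfl fun b _ => ?_
    show (∑ x : Fin n, v (x, b) * colS v b) = colS v b * colS v b
    rw [← Finset.sum_mul]
    rfl
  · rw [← Finset.sum_mul, Tq]

/-- the family: `d` constant vectors plus the configuration itself -/
noncomputable def famC (q : Fin n → Fin d → ℝ) :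
    (Fin d ⊕ Unit) → (Fin n × Fin d → ℝ) :=
  fun c => Sum.elim (fun b => fun x : Fin n × Fin d => if x.2 = b then (1:ℝ) else 0)
    (fun _ => qvec q) c

lemma famC_mem_ker (q : Fin n → Fin d → ℝ) (c : Fin d ⊕ Unit) :
    bearingLaplacian G q *ᵥ famC q c = 0 := by
  cases c with
  | inl b => exact bL_mulVec_cvec G q (fun a => if a = b then (1:ℝ) else 0)
  | inr u => exact bL_mulVec_qvec G q

lemma famC_li (q : Fin n → Fin d → ℝ) (hq : Function.Injective q) (hn : 2 ≤ n) :
    LinearIndependent ℝ (famC q) := by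
  rw [Fintype.linearIndependent_iff]
  intro g hg
  have heval : ∀ i : Fin n, ∀ a : Fin d, g (Sum.inl a) + g (Sum.inr ()) * q i a = 0 := by
    intro i a
    have := congrFun hg (i, a)
    rw [Finset.sum_apply] at this
    rw [Fintype.sum_sum_type] at this
    simpa [famC, qvec, Finset.sum_ite_eq', mul_comm] using this
  have hinr : g (Sum.inr ()) = 0 := by
    set i0 : Fin n := ⟨0, by omega⟩
    set i1 : Fin n := ⟨1, by omega⟩
    have hne : q i0 ≠ q i1 := fun hqe => by
      have : i0 = i1 := hq hqe
      simp [i0, i1, Fin.ext_iff] at this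
    obtain ⟨a0, ha0⟩ := Function.ne_iff.mp hne
    have h1 := heval i0 a0
    have h2 := heval i1 a0
    have : g (Sum.inr ()) * (q i0 a0 - q i1 a0) = 0 := by linarith [h1, h2, mul_sub (g (Sum.inr ())) (q i0 a0) (q i1 a0)]
    rcases mul_eq_zero.mp this with h | h
    · exact h
    · exact absurd (sub_eq_zero.mp h) ha0
  intro c
  cases c with
  | inr u => cases u; exact hinr
  | inl a =>
    have := heval ⟨0, by omega⟩ a
    rw [hinr] at this
    linarith

noncomputable def Phi (q : Fin n → Fin d → ℝ) :
    (Fin n × Fin d → ℝ) →ₗ[ℝ] (Fin d ⊕ Unit → ℝ) where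
  toFun v := Sum.elim (fun b => colS v b) (fun _ => Tq q v)
  map_add' u w := by
    funext c
    cases c with
    | inl b => simp [colS, Finset.sum_add_distrib]
    | inr u' => simp [Tq, mul_add, Finset.sum_add_distrib]
  map_smul' r u := by
    funext c
    cases c with
    | inl b => simp [colS, Finset.mul_sum]
    | inr u' => simp [Tq, Finset.mul_sum, mul_left_comm]

lemma span_le_ker (q : Fin n → Fin d → ℝ) :
    Submodule.span ℝ (Set.range (famC q))
      ≤ LinearMap.ker (bearingLaplacian G q).mulVecLin := by
  rw [Submodule.span_le]
  rintro _ ⟨c, rfl⟩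
  exact LinearMap.mem_ker.mpr (famC_mem_ker G q c)

lemma rank_add_ker (q : Fin n → Fin d → ℝ) :
    (bearingLaplacian G q).rank
      + Module.finrank ℝ (LinearMap.ker (bearingLaplacian G q).mulVecLin) = n * d := by
  have h := LinearMap.finrank_range_add_finrank_ker (bearingLaplacian G q).mulVecLin
  rw [Module.finrank_fintype_fun_eq_card, Fintype.card_prod, Fintype.card_fin,
    Fintype.card_fin] at h
  exact h

lemma ker_finrank_ge (q : Fin n → Fin d → ℝ) (hq : Function.Injective q) (hn : 2 ≤ n) :
    d + 1 ≤ Module.finrank ℝ (LinearMap.ker (bearingLaplacian G q).mulVecLin) := by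
  have h1 : Module.finrank ℝ (Submodule.span ℝ (Set.range (famC q))) = d + 1 := by
    rw [finrank_span_eq_card (famC_li q hq hn)]
    simp
  rw [← h1]
  exact Submodule.finrank_mono (span_le_ker G q)

lemma ker_finrank_le (q : Fin n → Fin d → ℝ)
    (hdet : (bearingLaplacian G q + Kmat q).det ≠ 0) :
    Module.finrank ℝ (LinearMap.ker (bearingLaplacian G q).mulVecLin) ≤ d + 1 := by
  set f := (Phi q).domRestrict (LinearMap.ker (bearingLaplacian G q).mulVecLin) with hf
  have hinj : Function.Injective f := by
    rw [← LinearMap.ker_eq_bot]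
    rw [LinearMap.ker_eq_bot']
    intro v hv
    have hcol : ∀ b : Fin d, colS v.1 b = 0 := fun b => congrFun hv (Sum.inl b)
    have hT : Tq q v.1 = 0 := congrFun hv (Sum.inr ())
    have hK : Kmat q *ᵥ v.1 = 0 := by
      funext x
      rw [Kmat_mulVec, hcol, hT, Pi.zero_apply]
      ring
    have hL : bearingLaplacian G q *ᵥ v.1 = 0 := v.2
    have hS : (bearingLaplacian G q + Kmat q) *ᵥ v.1 = 0 := by
      rw [Matrix.add_mulVec, hK, hL]
      simp
    by_contra hv0
    have hv1 : v.1 ≠ 0 := fun h => hv0 (Subtype.ext h)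
    exact hdet (Matrix.exists_mulVec_eq_zero_iff.mp ⟨v.1, hv1, hS⟩)
  have := LinearMap.finrank_le_finrank_of_injective hinj
  rwa [Module.finrank_fintype_fun_eq_card, Fintype.card_sum, Fintype.card_fin,
    Fintype.card_unit] at this

lemma rank_of_detS (q : Fin n → Fin d → ℝ) (hq : Function.Injective q) (hn : 2 ≤ n)
    (hdet : (bearingLaplacian G q + Kmat q).det ≠ 0) :
    (bearingLaplacian G q).rank = d * n - d - 1 := by
  have h1 := rank_add_ker G q
  have h2 := ker_finrank_ge G q hq hn
  have h3 := ker_finrank_le G q hdet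
  rw [mul_comm d n]
  omega

lemma detS_ne_zero (q : Fin n → Fin d → ℝ) (hq : Function.Injective q) (hn : 2 ≤ n)
    (hd : 1 ≤ d) (hrank : (bearingLaplacian G q).rank = d * n - d - 1) :
    (bearingLaplacian G q + Kmat q).det ≠ 0 := by
  intro hdet0
  obtain ⟨v, hv0, hS⟩ := Matrix.exists_mulVec_eq_zero_iff.mpr hdet0
  have hform : v ⬝ᵥ ((bearingLaplacian G q + Kmat q) *ᵥ v) = 0 := by
    rw [hS, dotProduct_zero]
  rw [Matrix.add_mulVec, dotProduct_add] at hform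
  have hLnn : 0 ≤ v ⬝ᵥ (bearingLaplacian G q *ᵥ v) := by
    have := (bL_posSemidef G q).dotProduct_mulVec_nonneg v
    rwa [show star v = v from funext fun _ => star_trivial _] at this
  have hKform := Kmat_qform q v
  have hKnn : 0 ≤ v ⬝ᵥ (Kmat q *ᵥ v) := by
    rw [hKform]
    have := Finset.sum_nonneg (fun b (_ : b ∈ Finset.univ) => mul_self_nonneg (colS v b))
    nlinarith [mul_self_nonneg (Tq q v)]
  have hL0 : v ⬝ᵥ (bearingLaplacian G q *ᵥ v) = 0 := by linarith
  have hK0 : v ⬝ᵥ (Kmat q *ᵥ v) = 0 := by linarith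
  -- components of K form vanish
  have hsumnn := Finset.sum_nonneg (fun b (_ : b ∈ Finset.univ) => mul_self_nonneg (colS v b))
  have hTnn := mul_self_nonneg (Tq q v)
  rw [hKform] at hK0
  have hT : Tq q v = 0 := mul_self_eq_zero.mp (by linarith)
  have hsum0 : ∑ b : Fin d, colS v b * colS v b = 0 := by linarith
  have hcol : ∀ b : Fin d, colS v b = 0 := fun b =>
    mul_self_eq_zero.mp
      ((Finset.sum_eq_zero_iff_of_nonneg
        (fun b _ => mul_self_nonneg (colS v b))).mp hsum0 b (Finset.mem_univ b))
  -- v is in the kernel of L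
  have hLv : bearingLaplacian G q *ᵥ v = 0 := by
    have := ((bL_posSemidef G q).dotProduct_mulVec_zero_iff v).mp
    rw [show star v = v from funext fun _ => star_trivial _] at this
    exact this hL0
  have hvker : v ∈ LinearMap.ker (bearingLaplacian G q).mulVecLin := hLv
  -- kernel equals span
  have hdn : d + 1 ≤ n * d := by
    calc d + 1 ≤ d + d := by omega
    _ = 2 * d := by ring
    _ ≤ n * d := Nat.mul_le_mul_right d hn
  have h1 := rank_add_ker G q
  have hkerfin : Module.finrank ℝ (LinearMap.ker (bearingLaplacian G q).mulVecLin) = d + 1 := by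
    rw [mul_comm d n] at hrank
    omega
  have hspanfin : Module.finrank ℝ (Submodule.span ℝ (Set.range (famC q))) = d + 1 := by
    rw [finrank_span_eq_card (famC_li q hq hn)]
    simp
  have hker_eq : Submodule.span ℝ (Set.range (famC q))
      = LinearMap.ker (bearingLaplacian G q).mulVecLin :=
    Submodule.eq_of_le_of_finrank_le (span_le_ker G q) (by rw [hkerfin, hspanfin])
  rw [← hker_eq] at hvker
  obtain ⟨w, hw⟩ := Submodule.mem_span_range_iff_exists_fun ℝ |>.mp hvker
  have hfc : ∀ c : Fin d ⊕ Unit, famC q c ⬝ᵥ v = 0 := by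
    intro c
    cases c with
    | inl b =>
      have : famC q (Sum.inl b) ⬝ᵥ v = colS v b := by
        rw [show famC q (Sum.inl b) ⬝ᵥ v
            = ∑ x : Fin n × Fin d, (if x.2 = b then (1:ℝ) else 0) * v x from rfl]
        rw [Fintype.sum_prod_type, colS]
        refine Finset.sum_congr rfl fun j _ => ?_
        simp [ite_mul]
      rw [this, hcol]
    | inr u =>
      have : famC q (Sum.inr u) ⬝ᵥ v = Tq q v := rfl
      rw [this, hT]
  have hvv : v ⬝ᵥ v = 0 := by
    have hdot : v ⬝ᵥ v = ∑ c : Fin d ⊕ Unit, w c * (famC q c ⬝ᵥ v) := by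
      nth_rewrite 1 [← hw]
      rw [show (∑ i : Fin d ⊕ Unit, w i • famC q i) ⬝ᵥ v
          = ∑ x : Fin n × Fin d, (∑ c : Fin d ⊕ Unit, w c * famC q c x) * v x from
        Finset.sum_congr rfl fun x _ => by rw [Finset.sum_apply]; simp]
      rw [Finset.sum_congr rfl fun x (_ : x ∈ Finset.univ) =>
        Finset.sum_mul (Finset.univ : Finset (Fin d ⊕ Unit))
          (fun c : Fin d ⊕ Unit => w c * famC q c x) (v x)]
      rw [Finset.sum_comm]
      refine Finset.sum_congr rfl fun c _ => ?_
      rw [dotProduct, Finset.mul_sum]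
      exact Finset.sum_congr rfl fun x _ => by ring
    rw [hdot]
    exact Finset.sum_eq_zero fun c _ => by rw [hfc, mul_zero]
  exact hv0 (dotProduct_self_eq_zero.mp hvv)

section poly
variable (P0 P1 : Fin n → Fin d → ℝ)

/-- the line segment configuration -/
def qf (t : ℝ) : Fin n → Fin d → ℝ := fun i a => P0 i a + t * (P1 i a - P0 i a)

noncomputable def qPol (i : Fin n) (a : Fin d) : Polynomial ℝ :=
  Polynomial.C (P0 i a) + Polynomial.C (P1 i a - P0 i a) * Polynomial.X

lemma qPol_eval (t : ℝ) (i : Fin n) (a : Fin d) :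
    (qPol P0 P1 i a).eval t = qf P0 P1 t i a := by
  simp [qPol, qf]
  ring

noncomputable def denPol (i j : Fin n) : Polynomial ℝ :=
  ∑ a : Fin d, (qPol P0 P1 j a - qPol P0 P1 i a) * (qPol P0 P1 j a - qPol P0 P1 i a)

lemma denPol_eval (t : ℝ) (i j : Fin n) :
    (denPol P0 P1 i j).eval t
      = (qf P0 P1 t j - qf P0 P1 t i) ⬝ᵥ (qf P0 P1 t j - qf P0 P1 t i) := by
  rw [denPol, Polynomial.eval_finset_sum, dotProduct]
  refine Finset.sum_congr rfl fun a _ => ?_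
  simp [qPol_eval]

noncomputable def pairsP : Finset (Fin n × Fin n) :=
  Finset.univ.filter (fun e => e.1 ≠ e.2)

noncomputable def DPol : Polynomial ℝ := ∏ e ∈ pairsP, denPol P0 P1 e.1 e.2

noncomputable def EPol (i j : Fin n) : Polynomial ℝ :=
  ∏ e ∈ pairsP.erase (i, j), denPol P0 P1 e.1 e.2

lemma DPol_factor {i j : Fin n} (hij : i ≠ j) :
    DPol P0 P1 = denPol P0 P1 i j * EPol P0 P1 i j := by
  have hmem : (i, j) ∈ pairsP (n := n) := by
    simp only [pairsP, Finset.mem_filter, Finset.mem_univ, true_and]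
    exact hij
  rw [DPol, EPol, ← Finset.mul_prod_erase pairsP (fun e => denPol P0 P1 e.1 e.2) hmem]

noncomputable def MPol : Matrix (Fin n × Fin d) (Fin n × Fin d) (Polynomial ℝ) :=
  fun x y =>
    (if x.1 = y.1 then
      ∑ k ∈ Finset.univ.filter (fun k => G.Adj x.1 k),
        ((if x.2 = y.2 then DPol P0 P1 else 0)
          - EPol P0 P1 x.1 k * ((qPol P0 P1 k x.2 - qPol P0 P1 x.1 x.2)
              * (qPol P0 P1 k y.2 - qPol P0 P1 x.1 y.2)))
     else if G.Adj x.1 y.1 then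
        EPol P0 P1 x.1 y.1 * ((qPol P0 P1 y.1 x.2 - qPol P0 P1 x.1 x.2)
            * (qPol P0 P1 y.1 y.2 - qPol P0 P1 x.1 y.2))
          - (if x.2 = y.2 then DPol P0 P1 else 0)
     else 0)
    + DPol P0 P1 * ((if x.2 = y.2 then 1 else 0) + qPol P0 P1 x.1 x.2 * qPol P0 P1 y.1 y.2)

lemma MPol_eval_entry (t : ℝ)
    (hden : ∀ i j : Fin n, i ≠ j →
      (qf P0 P1 t j - qf P0 P1 t i) ⬝ᵥ (qf P0 P1 t j - qf P0 P1 t i) ≠ 0)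
    (x y : Fin n × Fin d) :
    (MPol G P0 P1 x y).eval t
      = (DPol P0 P1).eval t
        * ((bearingLaplacian G (qf P0 P1 t) + Kmat (qf P0 P1 t)) x y) := by
  obtain ⟨i, a⟩ := x
  obtain ⟨j, b⟩ := y
  have hK : (DPol P0 P1 * ((if a = b then 1 else 0)
        + qPol P0 P1 i a * qPol P0 P1 j b)).eval t
      = (DPol P0 P1).eval t * Kmat (qf P0 P1 t) (i, a) (j, b) := by
    simp only [Polynomial.eval_mul, Polynomial.eval_add, apply_ite (Polynomial.eval t),
      Polynomial.eval_one, Polynomial.eval_zero, qPol_eval, Kmat]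
  have hterm : ∀ k : Fin n, i ≠ k →
      ((if a = b then DPol P0 P1 else 0)
        - EPol P0 P1 i k * ((qPol P0 P1 k a - qPol P0 P1 i a)
            * (qPol P0 P1 k b - qPol P0 P1 i b))).eval t
      = (DPol P0 P1).eval t * proj (qf P0 P1 t k - qf P0 P1 t i) a b := by
    intro k hik
    have hfac : (DPol P0 P1).eval t
        = (denPol P0 P1 i k).eval t * (EPol P0 P1 i k).eval t := by
      rw [DPol_factor P0 P1 hik, Polynomial.eval_mul]
    have hd0 : (denPol P0 P1 i k).eval t ≠ 0 := by
      rw [denPol_eval]; exact hden i k hik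
    rw [Polynomial.eval_sub, Polynomial.eval_mul, Polynomial.eval_mul,
      Polynomial.eval_sub, Polynomial.eval_sub, apply_ite (Polynomial.eval t),
      Polynomial.eval_zero]
    simp only [qPol_eval]
    rw [proj_apply, ← denPol_eval P0 P1 t i k]
    have hxa : (qf P0 P1 t k - qf P0 P1 t i) a = qf P0 P1 t k a - qf P0 P1 t i a := rfl
    have hxb : (qf P0 P1 t k - qf P0 P1 t i) b = qf P0 P1 t k b - qf P0 P1 t i b := rfl
    rw [hxa, hxb]
    by_cases hab : a = b
    · rw [if_pos hab, if_pos hab, hfac]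
      field_simp
    · rw [if_neg hab, if_neg hab, hfac]
      field_simp
      ring
  simp only [MPol, Matrix.add_apply]
  rw [Polynomial.eval_add, hK, mul_add]
  congr 1
  by_cases hij : i = j
  · subst hij
    rw [if_pos rfl]
    rw [show bearingLaplacian G (qf P0 P1 t) (i, a) (i, b)
        = (∑ k ∈ Finset.univ.filter (fun k => G.Adj i k),
            proj (qf P0 P1 t k - qf P0 P1 t i)) a b from by
      simp [bearingLaplacian]]
    rw [Matrix.sum_apply, Polynomial.eval_finset_sum, Finset.mul_sum]
    refine Finset.sum_congr rfl fun k hk => ?_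
    exact hterm k (G.ne_of_adj (Finset.mem_filter.mp hk).2)
  · rw [if_neg hij]
    rw [show bearingLaplacian G (qf P0 P1 t) (i, a) (j, b)
        = (if G.Adj i j then -(proj (qf P0 P1 t j - qf P0 P1 t i) a b) else 0) from by
      simp only [bearingLaplacian, if_neg hij]]
    by_cases hadj : G.Adj i j
    · rw [if_pos hadj, if_pos hadj]
      have := hterm j hij
      rw [Polynomial.eval_sub] at this
      rw [Polynomial.eval_sub, mul_neg]
      linarith [this]
    · rw [if_neg hadj, if_neg hadj]
      simp

lemma MPol_eval (t : ℝ)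
    (hden : ∀ i j : Fin n, i ≠ j →
      (qf P0 P1 t j - qf P0 P1 t i) ⬝ᵥ (qf P0 P1 t j - qf P0 P1 t i) ≠ 0) :
    (MPol G P0 P1).map (Polynomial.evalRingHom t)
      = (DPol P0 P1).eval t • (bearingLaplacian G (qf P0 P1 t) + Kmat (qf P0 P1 t)) := by
  ext x y
  rw [Matrix.map_apply, Matrix.smul_apply, smul_eq_mul]
  exact MPol_eval_entry G P0 P1 t hden x y

end poly

theorem stmt12' {n d : ℕ} (G : SimpleGraph (Fin n))
    (h : ∃ p : Fin n → Fin d → ℝ, Function.Injective p ∧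
      (bearingLaplacian G p).rank = d * n - d - 1) :
    ∀ (p₀ : Fin n → Fin d → ℝ) (ε : ℝ), 0 < ε →
      ∃ p : Fin n → Fin d → ℝ, Function.Injective p ∧
        (bearingLaplacian G p).rank = d * n - d - 1 ∧ dist p p₀ < ε := by
  intro p₀ ε hε
  obtain ⟨p₁, hinj, hrank⟩ := h
  by_cases hn1 : n ≤ 1
  · refine ⟨p₀, ?_, ?_, by simpa [dist_self] using hε⟩
    · intro x y _
      exact Fin.ext (by omega)
    · have hL0 : bearingLaplacian G p₀ = 0 := by
        ext x y
        obtain ⟨i, a⟩ := x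
        obtain ⟨j, b⟩ := y
        have hij : i = j := Fin.ext (by omega)
        subst hij
        rw [show bearingLaplacian G p₀ (i, a) (i, b)
            = (∑ k ∈ Finset.univ.filter (fun k => G.Adj i k),
                proj (p₀ k - p₀ i)) a b from by simp [bearingLaplacian]]
        have hemp : Finset.univ.filter (fun k => G.Adj i k) = ∅ := by
          rw [Finset.filter_eq_empty_iff]
          intro k _
          have : k = i := Fin.ext (by omega)
          subst this
          exact fun hadj => G.ne_of_adj hadj rfl
        rw [hemp, Finset.sum_empty]
        rfl
      rw [hL0, Matrix.rank_zero]
      have hdn : d * n ≤ d * 1 := Nat.mul_le_mul_left d hn1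
      rw [mul_one] at hdn
      omega
  · push_neg at hn1
    have hn2 : 2 ≤ n := hn1
    have hd : 1 ≤ d := by
      by_contra hd0
      push_neg at hd0
      have hdz : d = 0 := by omega
      subst hdz
      have heq : p₁ ⟨0, by omega⟩ = p₁ ⟨1, by omega⟩ := funext fun a => a.elim0
      have := hinj heq
      simp [Fin.ext_iff] at this
    have hq1 : qf p₀ p₁ 1 = p₁ := by
      funext i a
      simp [qf]
    have hden1 : ∀ i j : Fin n, i ≠ j →
        (qf p₀ p₁ 1 j - qf p₀ p₁ 1 i) ⬝ᵥ (qf p₀ p₁ 1 j - qf p₀ p₁ 1 i) ≠ 0 := by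
      intro i j hij h0
      have h1 := dotProduct_self_eq_zero.mp h0
      rw [hq1] at h1
      rw [sub_eq_zero] at h1
      exact hij (hinj h1).symm
    have hdetS1 : (bearingLaplacian G p₁ + Kmat p₁).det ≠ 0 :=
      detS_ne_zero G p₁ hinj hn2 hd hrank
    have hDt1 : (DPol p₀ p₁).eval 1 ≠ 0 := by
      rw [DPol, Polynomial.eval_prod]
      rw [Finset.prod_ne_zero_iff]
      intro e he
      rw [denPol_eval]
      refine hden1 e.1 e.2 ?_
      simpa [pairsP] using he
    have hMdet1 : ((MPol G p₀ p₁).det).eval 1 ≠ 0 := by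
      have hmap := MPol_eval G p₀ p₁ 1 hden1
      have h2 : ((MPol G p₀ p₁).map (Polynomial.evalRingHom 1)).det
          = ((DPol p₀ p₁).eval 1) ^ (Fintype.card (Fin n × Fin d))
            * (bearingLaplacian G (qf p₀ p₁ 1) + Kmat (qf p₀ p₁ 1)).det := by
        rw [hmap, Matrix.det_smul]
      rw [show (MPol G p₀ p₁).map ⇑(Polynomial.evalRingHom 1)
          = (Polynomial.evalRingHom 1).mapMatrix (MPol G p₀ p₁) from rfl,
        ← RingHom.map_det] at h2
      rw [hq1] at h2
      rw [show ((Polynomial.evalRingHom 1) (MPol G p₀ p₁).det)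
          = ((MPol G p₀ p₁).det).eval 1 from rfl] at h2
      rw [h2]
      exact mul_ne_zero (pow_ne_zero _ hDt1) hdetS1
    have hPne : (MPol G p₀ p₁).det * DPol p₀ p₁ ≠ 0 := by
      intro h0
      have h1 : ((MPol G p₀ p₁).det * DPol p₀ p₁).eval 1 = 0 := by rw [h0]; simp
      rw [Polynomial.eval_mul] at h1
      exact (mul_ne_zero hMdet1 hDt1) h1
    set M := ∑ x : Fin n × Fin d, |p₁ x.1 x.2 - p₀ x.1 x.2| with hM
    have hM0 : 0 ≤ M := Finset.sum_nonneg fun x _ => abs_nonneg _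
    have hδ0 : 0 < ε / (M + 1) := div_pos hε (by linarith)
    have hIoo : (Set.Ioo (0:ℝ) (ε / (M + 1))).Infinite := Set.Ioo_infinite hδ0
    obtain ⟨t, ht⟩ := (hIoo.diff (Polynomial.finite_setOf_isRoot hPne)).nonempty
    obtain ⟨⟨ht0, htδ⟩, htroot⟩ := ht
    have hev : ((MPol G p₀ p₁).det * DPol p₀ p₁).eval t ≠ 0 := fun h0 => htroot h0
    rw [Polynomial.eval_mul] at hev
    have hMdet_t : ((MPol G p₀ p₁).det).eval t ≠ 0 := fun h0 => hev (by rw [h0]; ring)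
    have hDt : (DPol p₀ p₁).eval t ≠ 0 := fun h0 => hev (by rw [h0]; ring)
    have hden_t : ∀ i j : Fin n, i ≠ j →
        (qf p₀ p₁ t j - qf p₀ p₁ t i) ⬝ᵥ (qf p₀ p₁ t j - qf p₀ p₁ t i) ≠ 0 := by
      intro i j hij
      have h1 : (denPol p₀ p₁ i j).eval t ≠ 0 := by
        intro h0
        apply hDt
        rw [DPol_factor p₀ p₁ hij, Polynomial.eval_mul, h0, zero_mul]
      rwa [denPol_eval] at h1
    have hinj_t : Function.Injective (qf p₀ p₁ t) := by
      intro i j hq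
      by_contra hij
      exact hden_t i j (fun hh => hij hh) (by rw [hq, sub_self, zero_dotProduct])
    have hdetS_t : (bearingLaplacian G (qf p₀ p₁ t) + Kmat (qf p₀ p₁ t)).det ≠ 0 := by
      have hmap := MPol_eval G p₀ p₁ t hden_t
      have h2 : ((MPol G p₀ p₁).det).eval t
          = ((DPol p₀ p₁).eval t) ^ (Fintype.card (Fin n × Fin d))
            * (bearingLaplacian G (qf p₀ p₁ t) + Kmat (qf p₀ p₁ t)).det := by
        rw [show ((MPol G p₀ p₁).det).eval t
            = ((Polynomial.evalRingHom t) (MPol G p₀ p₁).det) from rfl]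
        rw [RingHom.map_det, RingHom.mapMatrix_apply, hmap, Matrix.det_smul]
      intro h0
      rw [h0, mul_zero] at h2
      exact hMdet_t h2
    refine ⟨qf p₀ p₁ t, hinj_t, rank_of_detS G (qf p₀ p₁ t) hinj_t hn2 hdetS_t, ?_⟩
    rw [dist_pi_lt_iff hε]
    intro i
    rw [dist_pi_lt_iff hε]
    intro a
    rw [Real.dist_eq]
    have h1 : qf p₀ p₁ t i a - p₀ i a = t * (p₁ i a - p₀ i a) := by
      simp [qf]
    rw [h1, abs_mul, abs_of_pos ht0]
    have hle : |p₁ i a - p₀ i a| ≤ M :=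
      Finset.single_le_sum (fun x (_ : x ∈ Finset.univ) => abs_nonneg
        (p₁ x.1 x.2 - p₀ x.1 x.2)) (Finset.mem_univ (i, a))
    have h2 : t * (M + 1) < ε := by
      rw [lt_div_iff₀ (by linarith : (0:ℝ) < M + 1)] at htδ
      exact htδ
    nlinarith [hle, ht0]


end lems

theorem stmt12 {n d : ℕ} (G : SimpleGraph (Fin n))
    (h : ∃ p : Fin n → Fin d → ℝ, Function.Injective p ∧
      (bearingLaplacian G p).rank = d * n - d - 1) :
    ∀ (p₀ : Fin n → Fin d → ℝ) (ε : ℝ), 0 < ε →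
      ∃ p : Fin n → Fin d → ℝ, Function.Injective p ∧
        (bearingLaplacian G p).rank = d * n - d - 1 ∧ dist p p₀ < ε := stmt12' G h
end

section
/- The 4-cycle graph C_4 is generically bearing rigid in R^3: there exists a configuration p of four distinct points in R^3 (e.g., four points in 'general position' not all coplanar-collinear appropriately) such that the bearing Laplacian of (C_4, p) has rank 3*4 - 3 - 1 = 8. In particular, a generically bearing rigid graph in R^3 need not contain a Laman spanning subgraph, since C_4 has only 4 < 2*4 - 3 = 5 edges. -/
open Matrix

open scoped Classical in
/-- A graph on `n` vertices is Laman if it has exactly `2n - 3` edges and every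
subset of `k ≥ 2` vertices spans at most `2k - 3` edges. -/
def IsLaman {n : ℕ} (G : SimpleGraph (Fin n)) : Prop :=
  G.edgeFinset.card = 2 * n - 3 ∧
  ∀ S : Finset (Fin n), 2 ≤ S.card →
    (G.edgeFinset.filter (fun e => ∀ v ∈ e, v ∈ S)).card ≤ 2 * S.card - 3

noncomputable def pcfg : Fin 4 → Fin 3 → ℝ := ![![0,0,0],![1,0,0],![1,1,0],![0,0,1]]

def LZ : Matrix (Fin 12) (Fin 12) ℤ :=
  !![3, 0, 0, 0, 0, 0, 0, 0, 0, (-3 : ℤ), 0, 0;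
    0, 6, 0, 0, (-3 : ℤ), 0, 0, 0, 0, 0, (-3 : ℤ), 0;
    0, 0, 3, 0, 0, (-3 : ℤ), 0, 0, 0, 0, 0, 0;
    0, 0, 0, 3, 0, 0, (-3 : ℤ), 0, 0, 0, 0, 0;
    0, (-3 : ℤ), 0, 0, 3, 0, 0, 0, 0, 0, 0, 0;
    0, 0, (-3 : ℤ), 0, 0, 6, 0, 0, (-3 : ℤ), 0, 0, 0;
    0, 0, 0, (-3 : ℤ), 0, 0, 5, (-1 : ℤ), 1, (-2 : ℤ), 1, (-1 : ℤ);
    0, 0, 0, 0, 0, 0, (-1 : ℤ), 2, 1, 1, (-2 : ℤ), (-1 : ℤ);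
    0, 0, 0, 0, 0, (-3 : ℤ), 1, 1, 5, (-1 : ℤ), (-1 : ℤ), (-2 : ℤ);
    (-3 : ℤ), 0, 0, 0, 0, 0, (-2 : ℤ), 1, (-1 : ℤ), 5, (-1 : ℤ), 1;
    0, (-3 : ℤ), 0, 0, 0, 0, 1, (-2 : ℤ), (-1 : ℤ), (-1 : ℤ), 5, 1;
    0, 0, 0, 0, 0, 0, (-1 : ℤ), (-1 : ℤ), (-2 : ℤ), 1, 1, 2]
def CZ : Matrix (Fin 12) (Fin 8) ℤ :=
  !![3, 0, 0, 0, 0, 0, 0, 0;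
    0, 6, 0, 0, (-3 : ℤ), 0, 0, 0;
    0, 0, 3, 0, 0, (-3 : ℤ), 0, 0;
    0, 0, 0, 3, 0, 0, (-3 : ℤ), 0;
    0, (-3 : ℤ), 0, 0, 3, 0, 0, 0;
    0, 0, (-3 : ℤ), 0, 0, 6, 0, 0;
    0, 0, 0, (-3 : ℤ), 0, 0, 5, (-1 : ℤ);
    0, 0, 0, 0, 0, 0, (-1 : ℤ), 2;
    0, 0, 0, 0, 0, (-3 : ℤ), 1, 1;
    (-3 : ℤ), 0, 0, 0, 0, 0, (-2 : ℤ), 1;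
    0, (-3 : ℤ), 0, 0, 0, 0, 1, (-2 : ℤ);
    0, 0, 0, 0, 0, 0, (-1 : ℤ), (-1 : ℤ)]
def DZ : Matrix (Fin 8) (Fin 12) ℤ :=
  !![1, 0, 0, 0, 0, 0, 0, 0, 0, (-1 : ℤ), 0, 0;
    0, 1, 0, 0, 0, 0, 0, 0, 0, 0, (-1 : ℤ), 0;
    0, 0, 1, 0, 0, 0, 0, 0, (-1 : ℤ), 0, 0, 0;
    0, 0, 0, 1, 0, 0, 0, 0, 1, (-1 : ℤ), 0, (-1 : ℤ);
    0, 0, 0, 0, 1, 0, 0, 0, 0, 0, (-1 : ℤ), 0;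
    0, 0, 0, 0, 0, 1, 0, 0, (-1 : ℤ), 0, 0, 0;
    0, 0, 0, 0, 0, 0, 1, 0, 1, (-1 : ℤ), 0, (-1 : ℤ);
    0, 0, 0, 0, 0, 0, 0, 1, 1, 0, (-1 : ℤ), (-1 : ℤ)]
def TZ : Matrix (Fin 8) (Fin 8) ℤ :=
  !![1, 0, 0, 0, 0, 0, 0, 0;
    0, 1, 0, 0, 1, 0, 0, 0;
    0, 0, 2, 0, 0, 1, 0, 0;
    0, 0, 0, 3, 0, 0, 2, 1;
    0, 1, 0, 0, 2, 0, 0, 0;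
    0, 0, 1, 0, 0, 1, 0, 0;
    0, 0, 0, 2, 0, 0, 2, 1;
    0, 0, 0, 1, 0, 0, 1, 2]
set_option maxHeartbeats 1000000 in
theorem hfac : LZ = CZ * DZ := by decide
set_option maxHeartbeats 1000000 in
theorem hst : (LZ.submatrix (Fin.castLE (by norm_num : (8:ℕ) ≤ 12) : Fin 8 → Fin 12) (Fin.castLE (by norm_num : (8:ℕ) ≤ 12))) * TZ = (3 : ℤ) • 1 := by decide

def e12 : Fin 4 × Fin 3 ≃ Fin 12 := finProdFinEquiv

noncomputable def Lbig : Matrix (Fin 12) (Fin 12) ℝ :=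
  (3 : ℝ)⁻¹ • (LZ.map (Int.castRingHom ℝ))

lemma finmk3_2 (h : 2 < 3) : (⟨2, h⟩ : Fin 3) = 2 := rfl
lemma val4_0 : ((0 : Fin 4) : ℕ) = 0 := rfl
lemma val4_1 : ((1 : Fin 4) : ℕ) = 1 := rfl
lemma val4_2 : ((2 : Fin 4) : ℕ) = 2 := rfl
lemma val4_3 : ((3 : Fin 4) : ℕ) = 3 := rfl
lemma val3_0 : ((0 : Fin 3) : ℕ) = 0 := rfl
lemma val3_1 : ((1 : Fin 3) : ℕ) = 1 := rfl
lemma val3_2 : ((2 : Fin 3) : ℕ) = 2 := rfl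
lemma finmk4_2 (h : 2 < 4) : (⟨2, h⟩ : Fin 4) = 2 := rfl
lemma finmk4_3 (h : 3 < 4) : (⟨3, h⟩ : Fin 4) = 3 := rfl

lemma pcfg_0 : pcfg 0 = ![0,0,0] := rfl
lemma pcfg_1 : pcfg 1 = ![1,0,0] := rfl
lemma pcfg_2 : pcfg 2 = ![1,1,0] := rfl
lemma pcfg_3 : pcfg 3 = ![0,0,1] := rfl

lemma proj01 : proj (pcfg 1 - pcfg 0) = !![0, 0, 0;0, 1, 0;0, 0, 1] := by
  ext a b
  fin_cases a <;> fin_cases b <;>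
    norm_num (config := { decide := true }) [proj, pcfg_0, pcfg_1, pcfg_2, pcfg_3, dotProduct,
      Fin.sum_univ_three, Matrix.vecMulVec_apply, Matrix.sub_apply,
      Matrix.one_apply, Matrix.smul_apply, Matrix.cons_val_two, Matrix.cons_val_one,
      Matrix.cons_val_zero, Matrix.head_cons, Matrix.tail_cons]

lemma proj03 : proj (pcfg 3 - pcfg 0) = !![1, 0, 0;0, 1, 0;0, 0, 0] := by
  ext a b
  fin_cases a <;> fin_cases b <;>
    norm_num (config := { decide := true }) [proj, pcfg_0, pcfg_1, pcfg_2, pcfg_3, dotProduct,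
      Fin.sum_univ_three, Matrix.vecMulVec_apply, Matrix.sub_apply,
      Matrix.one_apply, Matrix.smul_apply, Matrix.cons_val_two, Matrix.cons_val_one,
      Matrix.cons_val_zero, Matrix.head_cons, Matrix.tail_cons]

lemma proj10 : proj (pcfg 0 - pcfg 1) = !![0, 0, 0;0, 1, 0;0, 0, 1] := by
  ext a b
  fin_cases a <;> fin_cases b <;>
    norm_num (config := { decide := true }) [proj, pcfg_0, pcfg_1, pcfg_2, pcfg_3, dotProduct,
      Fin.sum_univ_three, Matrix.vecMulVec_apply, Matrix.sub_apply,
      Matrix.one_apply, Matrix.smul_apply, Matrix.cons_val_two, Matrix.cons_val_one,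
      Matrix.cons_val_zero, Matrix.head_cons, Matrix.tail_cons]

lemma proj12 : proj (pcfg 2 - pcfg 1) = !![1, 0, 0;0, 0, 0;0, 0, 1] := by
  ext a b
  fin_cases a <;> fin_cases b <;>
    norm_num (config := { decide := true }) [proj, pcfg_0, pcfg_1, pcfg_2, pcfg_3, dotProduct,
      Fin.sum_univ_three, Matrix.vecMulVec_apply, Matrix.sub_apply,
      Matrix.one_apply, Matrix.smul_apply, Matrix.cons_val_two, Matrix.cons_val_one,
      Matrix.cons_val_zero, Matrix.head_cons, Matrix.tail_cons]

lemma proj21 : proj (pcfg 1 - pcfg 2) = !![1, 0, 0;0, 0, 0;0, 0, 1] := by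
  ext a b
  fin_cases a <;> fin_cases b <;>
    norm_num (config := { decide := true }) [proj, pcfg_0, pcfg_1, pcfg_2, pcfg_3, dotProduct,
      Fin.sum_univ_three, Matrix.vecMulVec_apply, Matrix.sub_apply,
      Matrix.one_apply, Matrix.smul_apply, Matrix.cons_val_two, Matrix.cons_val_one,
      Matrix.cons_val_zero, Matrix.head_cons, Matrix.tail_cons]

lemma proj23 : proj (pcfg 3 - pcfg 2) = !![2/3, (-1/3 : ℝ), 1/3;(-1/3 : ℝ), 2/3, 1/3;1/3, 1/3, 2/3] := by
  ext a b
  fin_cases a <;> fin_cases b <;>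
    norm_num (config := { decide := true }) [proj, pcfg_0, pcfg_1, pcfg_2, pcfg_3, dotProduct,
      Fin.sum_univ_three, Matrix.vecMulVec_apply, Matrix.sub_apply,
      Matrix.one_apply, Matrix.smul_apply, Matrix.cons_val_two, Matrix.cons_val_one,
      Matrix.cons_val_zero, Matrix.head_cons, Matrix.tail_cons]

lemma proj30 : proj (pcfg 0 - pcfg 3) = !![1, 0, 0;0, 1, 0;0, 0, 0] := by
  ext a b
  fin_cases a <;> fin_cases b <;>
    norm_num (config := { decide := true }) [proj, pcfg_0, pcfg_1, pcfg_2, pcfg_3, dotProduct,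
      Fin.sum_univ_three, Matrix.vecMulVec_apply, Matrix.sub_apply,
      Matrix.one_apply, Matrix.smul_apply, Matrix.cons_val_two, Matrix.cons_val_one,
      Matrix.cons_val_zero, Matrix.head_cons, Matrix.tail_cons]

lemma proj32 : proj (pcfg 2 - pcfg 3) = !![2/3, (-1/3 : ℝ), 1/3;(-1/3 : ℝ), 2/3, 1/3;1/3, 1/3, 2/3] := by
  ext a b
  fin_cases a <;> fin_cases b <;>
    norm_num (config := { decide := true }) [proj, pcfg_0, pcfg_1, pcfg_2, pcfg_3, dotProduct,
      Fin.sum_univ_three, Matrix.vecMulVec_apply, Matrix.sub_apply,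
      Matrix.one_apply, Matrix.smul_apply, Matrix.cons_val_two, Matrix.cons_val_one,
      Matrix.cons_val_zero, Matrix.head_cons, Matrix.tail_cons]


lemma filt0 : (Finset.univ.filter (fun k => (SimpleGraph.cycleGraph 4).Adj 0 k))
    = {(1 : Fin 4), 3} := by
  ext k; fin_cases k <;> simp <;> decide

lemma filt1 : (Finset.univ.filter (fun k => (SimpleGraph.cycleGraph 4).Adj 1 k))
    = {(0 : Fin 4), 2} := by
  ext k; fin_cases k <;> simp <;> decide

lemma filt2 : (Finset.univ.filter (fun k => (SimpleGraph.cycleGraph 4).Adj 2 k))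
    = {(1 : Fin 4), 3} := by
  ext k; fin_cases k <;> simp <;> decide

lemma filt3 : (Finset.univ.filter (fun k => (SimpleGraph.cycleGraph 4).Adj 3 k))
    = {(0 : Fin 4), 2} := by
  ext k; fin_cases k <;> simp <;> decide

lemma rank_row_select {l m n : Type*} [Fintype l] [Fintype m] [Fintype n]
    [DecidableEq m] (A : Matrix m n ℝ) (f : l → m) :
    (A.submatrix f id).rank ≤ A.rank := by
  have h : A.submatrix f id = ((1 : Matrix m m ℝ).submatrix f id) * A := by
    ext i j
    simp [Matrix.mul_apply, Matrix.one_apply, Finset.sum_ite_eq]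
  rw [h]
  exact Matrix.rank_mul_le_right _ _

lemma rank_col_select {m n o : Type*} [Fintype m] [Fintype n] [Fintype o]
    [DecidableEq n] (A : Matrix m n ℝ) (g : o → n) :
    (A.submatrix id g).rank ≤ A.rank := by
  have h : A.submatrix id g = A * ((1 : Matrix n n ℝ).submatrix id g) := by
    ext i j
    simp [Matrix.mul_apply, Matrix.one_apply, Finset.sum_ite_eq']
  rw [h]
  exact Matrix.rank_mul_le_left _ _

lemma rank_select {l m n o : Type*} [Fintype l] [Fintype m] [Fintype n] [Fintype o]
    [DecidableEq m] [DecidableEq n] (A : Matrix m n ℝ) (f : l → m) (g : o → n) :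
    (A.submatrix f g).rank ≤ A.rank := by
  have : A.submatrix f g = (A.submatrix f id).submatrix id g := rfl
  rw [this]
  exact (rank_col_select _ _).trans (rank_row_select _ _)

lemma lbig_rank_le : Lbig.rank ≤ 8 := by
  have h : Lbig = ((3 : ℝ)⁻¹ • CZ.map (Int.castRingHom ℝ)) * DZ.map (Int.castRingHom ℝ) := by
    rw [Lbig, hfac, Matrix.map_mul, Matrix.smul_mul]
  rw [h]
  exact (Matrix.rank_mul_le_left _ _).trans
    (by simpa using Matrix.rank_le_card_width ((3 : ℝ)⁻¹ • CZ.map (Int.castRingHom ℝ)))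

lemma smat_unit :
    (Lbig.submatrix (Fin.castLE (by norm_num : (8:ℕ) ≤ 12) : Fin 8 → Fin 12)
      (Fin.castLE (by norm_num : (8:ℕ) ≤ 12))) * (TZ.map (Int.castRingHom ℝ)) = 1 := by
  have h1 : Lbig.submatrix (Fin.castLE (by norm_num : (8:ℕ) ≤ 12) : Fin 8 → Fin 12)
      (Fin.castLE (by norm_num : (8:ℕ) ≤ 12)) =
      (3 : ℝ)⁻¹ • ((LZ.submatrix (Fin.castLE (by norm_num : (8:ℕ) ≤ 12) : Fin 8 → Fin 12)
        (Fin.castLE (by norm_num : (8:ℕ) ≤ 12))).map (Int.castRingHom ℝ)) := by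
    ext i j
    simp [Lbig]
  rw [h1, Matrix.smul_mul, ← Matrix.map_mul, hst]
  have h2 : ((3 : ℤ) • (1 : Matrix (Fin 8) (Fin 8) ℤ)).map (Int.castRingHom ℝ)
      = (3 : ℝ) • 1 := by
    ext i j
    simp only [Matrix.map_apply, Matrix.smul_apply, Matrix.one_apply]
    by_cases h : i = j <;> simp [h]
  rw [h2, smul_smul]
  norm_num

lemma lbig_rank_ge : 8 ≤ Lbig.rank := by
  have hU := IsUnit.of_mul_eq_one _ smat_unit
  have h8 := Matrix.rank_of_isUnit _ hU
  calc (8 : ℕ) = (Lbig.submatrix (Fin.castLE (by norm_num : (8:ℕ) ≤ 12) : Fin 8 → Fin 12)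
      (Fin.castLE (by norm_num : (8:ℕ) ≤ 12))).rank := by rw [h8]; simp
    _ ≤ Lbig.rank := rank_select _ _ _

set_option maxHeartbeats 4000000 in
lemma key : bearingLaplacian (SimpleGraph.cycleGraph 4) pcfg =
    Lbig.submatrix e12 e12 := by
  ext ⟨i, a⟩ ⟨j, b⟩
  fin_cases i <;> fin_cases a <;> fin_cases j <;> fin_cases b <;>
  · simp only [finmk3_2, finmk4_2, finmk4_3, bearingLaplacian, Finset.sum_filter]
    norm_num (config := { decide := true }) [Fin.sum_univ_four,
      val4_0, val4_1, val4_2, val4_3, val3_0, val3_1, val3_2,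
      Matrix.vecHead, Matrix.vecTail, Function.comp, proj01, proj10, proj12, proj21, proj23, proj32, proj30, proj03,
      Finset.sum_apply, Matrix.add_apply, Matrix.submatrix_apply, Lbig, LZ,
      Matrix.smul_apply, Matrix.map_apply, e12, finProdFinEquiv, Fin.divNat, Fin.modNat,
      Matrix.cons_val_two, Matrix.cons_val_one, Matrix.cons_val_zero, Matrix.head_cons, Matrix.tail_cons]

lemma pcfg_inj : Function.Injective pcfg := by
  intro a b h
  fin_cases a <;> fin_cases b <;>
    first
      | rfl
      | (exfalso
         simp only [pcfg] at h
         have h0 := congrFun h 0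
         have h1 := congrFun h 1
         have h2 := congrFun h 2
         revert h0 h1 h2
         norm_num [Matrix.cons_val_two, Matrix.head_cons, Matrix.tail_cons])

theorem stmt18 :
    (∃ p : Fin 4 → Fin 3 → ℝ, Function.Injective p ∧
      (bearingLaplacian (SimpleGraph.cycleGraph 4) p).rank = 3 * 4 - 3 - 1) ∧
    (SimpleGraph.cycleGraph 4).edgeFinset.card = 4 ∧
    ¬ ∃ H : SimpleGraph (Fin 4), H ≤ SimpleGraph.cycleGraph 4 ∧ IsLaman H := by
  refine ⟨⟨pcfg, pcfg_inj, ?_⟩, by decide, ?_⟩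
  · rw [key]
    rw [Matrix.rank_submatrix Lbig e12 e12]
    have := le_antisymm lbig_rank_le lbig_rank_ge
    omega
  · rintro ⟨H, hle, hcard, -⟩
    classical
    have hsub : H.edgeFinset ⊆ (SimpleGraph.cycleGraph 4).edgeFinset :=
      SimpleGraph.edgeFinset_mono hle
    have h1 : H.edgeFinset.card ≤ (SimpleGraph.cycleGraph 4).edgeFinset.card :=
      Finset.card_le_card hsub
    have h2 : (SimpleGraph.cycleGraph 4).edgeFinset.card = 4 := by decide
    omega
end
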